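/- arXiv:math/0611432 — 2 statements merged into one kernel-verified Lean document; each statement's English description precedes it below -/
import Mathlib

section
/- Let α ∈ (1,2) and C > 0, assume ν̄(x) ~ C x^{−α} as x → ∞, and let κ^{α,1} : [0,∞) → [0,∞) be the inverse function of y ↦ y + K y^α, where K = C Γ(2−α)/(m(α−1)). Then for every z ≥ 0, lim_{t→(1/m)⁻} (1−mt)^{−1/(α−1)} κ^{(t)}((1−mt)^{α/(α−1)} z) = κ^{α,1}(z). -/
open MeasureTheory Filter

/-- The Laplace exponent `Ψ^(t)(ρ) = -ρ + t ∫_0^∞ (1 - e^{-ρ l}) ν(dl)`. -/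
noncomputable def Psi (ν : Measure ℝ) (t ρ : ℝ) : ℝ :=
  -ρ + t * ∫ l, (1 - Real.exp (-(ρ * l))) ∂ν

open Set Real

-- basic exp inequalities
lemma one_sub_exp_neg_le {x : ℝ} (hx : 0 ≤ x) : 1 - Real.exp (-x) ≤ x := by
  nlinarith [Real.add_one_le_exp (-x)]

lemma one_sub_exp_neg_nonneg {x : ℝ} (hx : 0 ≤ x) : 0 ≤ 1 - Real.exp (-x) := by
  have := Real.exp_le_exp.2 (neg_nonpos_of_nonneg hx)
  simpa using this.trans_eq Real.exp_zero

lemma hh_integrable {α : ℝ} (hα1 : 1 < α) (hα2 : α < 2) :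
    IntegrableOn (fun u : ℝ => (1 - Real.exp (-u)) * u ^ (-α)) (Ioi 0) := by
  have hmeas : Measurable (fun u : ℝ => (1 - Real.exp (-u)) * u ^ (-α)) := by
    fun_prop
  have h1 : IntegrableOn (fun u : ℝ => (1 - Real.exp (-u)) * u ^ (-α)) (Ioc 0 1) := by
    have hb : IntegrableOn (fun u : ℝ => u ^ (1 - α)) (Ioc 0 1) := by
      have := (intervalIntegral.intervalIntegrable_rpow' (a := 0) (b := 1) (r := 1 - α) (by linarith))
      rwa [intervalIntegrable_iff_integrableOn_Ioc_of_le (by norm_num)] at this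
    refine Integrable.mono' hb hmeas.aestronglyMeasurable ?_
    filter_upwards [ae_restrict_mem measurableSet_Ioc] with u hu
    have hu0 : 0 < u := hu.1
    have h1 : 0 ≤ 1 - Real.exp (-u) := one_sub_exp_neg_nonneg hu0.le
    have h2 : (0:ℝ) ≤ u ^ (-α) := Real.rpow_nonneg hu0.le _
    rw [Real.norm_eq_abs, abs_of_nonneg (mul_nonneg h1 h2)]
    calc (1 - Real.exp (-u)) * u ^ (-α) ≤ u * u ^ (-α) :=
          mul_le_mul_of_nonneg_right (one_sub_exp_neg_le hu0.le) h2
      _ = u ^ (1 - α) := by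
          rw [show (1:ℝ) - α = 1 + -α by ring, Real.rpow_add hu0, Real.rpow_one]
  have h2 : IntegrableOn (fun u : ℝ => (1 - Real.exp (-u)) * u ^ (-α)) (Ioi 1) := by
    have hb : IntegrableOn (fun u : ℝ => u ^ (-α)) (Ioi 1) :=
      integrableOn_Ioi_rpow_of_lt (by linarith) one_pos
    refine Integrable.mono' hb hmeas.aestronglyMeasurable ?_
    filter_upwards [ae_restrict_mem measurableSet_Ioi] with u hu
    have hu0 : (0:ℝ) < u := lt_trans one_pos hu
    have h1 : 0 ≤ 1 - Real.exp (-u) := one_sub_exp_neg_nonneg hu0.le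
    have h2 : (0:ℝ) ≤ u ^ (-α) := Real.rpow_nonneg hu0.le _
    rw [Real.norm_eq_abs, abs_of_nonneg (mul_nonneg h1 h2)]
    calc (1 - Real.exp (-u)) * u ^ (-α) ≤ 1 * u ^ (-α) :=
          mul_le_mul_of_nonneg_right (by nlinarith [Real.exp_pos (-u)]) h2
      _ = u ^ (-α) := one_mul _
  have : IntegrableOn (fun u : ℝ => (1 - Real.exp (-u)) * u ^ (-α)) (Ioc 0 1 ∪ Ioi 1) :=
    h1.union h2
  refine this.mono_set ?_
  intro x hx
  rcases le_or_gt x 1 with h | h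
  · exact Or.inl ⟨hx, h⟩
  · exact Or.inr h

lemma gamma_integral_eval {α : ℝ} (hα1 : 1 < α) (hα2 : α < 2) :
    ∫ u in Ioi (0:ℝ), (1 - Real.exp (-u)) * u ^ (-α) =
      Real.Gamma (2 - α) / (α - 1) := by
  set h : ℝ → ℝ := fun u => (1 - Real.exp (-u)) * u ^ (-α) with hh
  set F : ℝ → ℝ := fun u => (1 - Real.exp (-u)) * u ^ (1 - α) with hF
  have hderiv : ∀ x ∈ Ioi (0:ℝ), HasDerivAt F
      (Real.exp (-x) * x ^ (1 - α) + (1 - Real.exp (-x)) * ((1 - α) * x ^ (-α))) x := by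
    intro x hx
    have h1 : HasDerivAt (fun u : ℝ => 1 - Real.exp (-u)) (Real.exp (-x)) x := by
      have := (Real.hasDerivAt_exp (-x)).comp x (hasDerivAt_neg x)
      exact (this.const_sub 1).congr_deriv (by ring)
    have h2 : HasDerivAt (fun u : ℝ => u ^ (1 - α)) ((1 - α) * x ^ (-α)) x := by
      have := Real.hasDerivAt_rpow_const (p := 1 - α) (Or.inl (ne_of_gt hx))
      convert this using 2
      ring_nf
    exact h1.mul h2
  have hF0 : ContinuousWithinAt F (Ici 0) 0 := by
    have key : Tendsto F (nhdsWithin 0 (Ici 0)) (nhds 0) := by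
      have hb : Tendsto (fun u : ℝ => u ^ (2 - α)) (nhdsWithin 0 (Ici 0)) (nhds 0) := by
        have : ContinuousAt (fun u : ℝ => u ^ (2 - α)) 0 :=
          Real.continuousAt_rpow_const 0 (2 - α) (Or.inr (by linarith))
        have h0 : (0:ℝ) ^ (2 - α) = 0 := Real.zero_rpow (by linarith)
        have h2 := this.continuousWithinAt (s := Ici 0)
        rw [ContinuousWithinAt] at h2
        simpa [h0] using h2
      refine tendsto_of_tendsto_of_tendsto_of_le_of_le' tendsto_const_nhds hb ?_ ?_
      · filter_upwards [self_mem_nhdsWithin] with u (hu : 0 ≤ u)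
        exact mul_nonneg (one_sub_exp_neg_nonneg hu) (Real.rpow_nonneg hu _)
      · filter_upwards [self_mem_nhdsWithin] with u (hu : 0 ≤ u)
        rcases eq_or_lt_of_le hu with rfl | hu0
        · simp [hF, Real.zero_rpow (show (1:ℝ) - α ≠ 0 by intro h; linarith)]
          rw [Real.zero_rpow (show (2:ℝ) - α ≠ 0 by intro h; linarith)]
        · calc F u ≤ u * u ^ (1 - α) :=
              mul_le_mul_of_nonneg_right (one_sub_exp_neg_le hu)
                (Real.rpow_nonneg hu _)
            _ = u ^ (2 - α) := by
                rw [show (2:ℝ) - α = 1 + (1 - α) by ring, Real.rpow_add hu0, Real.rpow_one]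
    unfold ContinuousWithinAt
    convert key
    simp [hF, Real.zero_rpow (show (1:ℝ) - α ≠ 0 by intro h; linarith)]
  have hFtop : Tendsto F atTop (nhds 0) := by
    have hb : Tendsto (fun u : ℝ => u ^ (1 - α)) atTop (nhds 0) := by
      simpa using tendsto_rpow_neg_atTop (show (0:ℝ) < α - 1 by linarith)
    refine tendsto_of_tendsto_of_tendsto_of_le_of_le' tendsto_const_nhds hb ?_ ?_
    · filter_upwards [eventually_ge_atTop (0:ℝ)] with u hu
      exact mul_nonneg (one_sub_exp_neg_nonneg hu) (Real.rpow_nonneg hu _)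
    · filter_upwards [eventually_ge_atTop (0:ℝ)] with u hu
      calc F u ≤ 1 * u ^ (1 - α) :=
            mul_le_mul_of_nonneg_right (by nlinarith [Real.exp_pos (-u)])
              (Real.rpow_nonneg hu _)
        _ = u ^ (1 - α) := one_mul _
  have hGint : IntegrableOn (fun x : ℝ => Real.exp (-x) * x ^ (1 - α)) (Ioi 0) := by
    have := Real.GammaIntegral_convergent (s := 2 - α) (by linarith)
    simpa [show (2:ℝ) - α - 1 = 1 - α by ring] using this
  have hhint := hh_integrable hα1 hα2
  have hF'int : IntegrableOn
      (fun x : ℝ => Real.exp (-x) * x ^ (1 - α) + (1 - Real.exp (-x)) * ((1 - α) * x ^ (-α)))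
      (Ioi 0) := by
    refine hGint.add ?_
    have h3 : IntegrableOn (fun x : ℝ => (1 - α) * ((1 - Real.exp (-x)) * x ^ (-α))) (Ioi 0) :=
      hhint.const_mul _
    exact IntegrableOn.congr_fun h3 (fun x _ => by ring) measurableSet_Ioi
  have key := integral_Ioi_of_hasDerivAt_of_tendsto hF0 hderiv hF'int hFtop
  have hF0val : F 0 = 0 := by
    simp [hF, Real.zero_rpow (show (1:ℝ) - α ≠ 0 by intro h; linarith)]
  rw [hF0val, sub_zero] at key
  have hsplit : ∫ x in Ioi (0:ℝ),
      (Real.exp (-x) * x ^ (1 - α) + (1 - Real.exp (-x)) * ((1 - α) * x ^ (-α)))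
      = (∫ x in Ioi (0:ℝ), Real.exp (-x) * x ^ (1 - α)) + (1 - α) * ∫ x in Ioi (0:ℝ), h x := by
    have h4 : IntegrableOn (fun x : ℝ => (1 - α) * ((1 - Real.exp (-x)) * x ^ (-α))) (Ioi 0) :=
      hhint.const_mul _
    rw [integral_add hGint (IntegrableOn.congr_fun h4 (fun x _ => by ring) measurableSet_Ioi)]
    congr 1
    rw [← integral_const_mul]
    exact setIntegral_congr_fun measurableSet_Ioi (fun x _ => by ring)
  have hGamma : ∫ x in Ioi (0:ℝ), Real.exp (-x) * x ^ (1 - α) = Real.Gamma (2 - α) := by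
    rw [Real.Gamma_eq_integral (by linarith : (0:ℝ) < 2 - α)]
    exact setIntegral_congr_fun measurableSet_Ioi (fun x _ => by
      rw [show (2:ℝ) - α - 1 = 1 - α by ring])
  rw [hsplit, hGamma] at key
  have hα1' : α - 1 ≠ 0 := by intro h; linarith
  field_simp
  linarith [key]


lemma nu_ae_pos {ν : Measure ℝ} (hν0 : ν (Set.Iic 0) = 0) : ∀ᵐ l ∂ν, 0 < l := by
  rw [ae_iff]
  convert hν0 using 2
  ext l
  simp [not_lt]

lemma exp_ineq1 {x : ℝ} (hx : 0 ≤ x) : 0 ≤ Real.exp (-x) - 1 + x ∧ Real.exp (-x) - 1 + x ≤ x := by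
  constructor
  · nlinarith [Real.add_one_le_exp (-x)]
  · nlinarith [Real.exp_le_exp.2 (neg_nonpos_of_nonneg hx), Real.exp_zero]

lemma int_one_sub_exp {ν : Measure ℝ} (hν0 : ν (Set.Iic 0) = 0)
    (hint : Integrable (fun l : ℝ => l) ν) {ρ : ℝ} (hρ : 0 ≤ ρ) :
    Integrable (fun l : ℝ => 1 - Real.exp (-(ρ * l))) ν := by
  refine Integrable.mono' (hint.const_mul ρ) ?_ ?_
  · exact (Continuous.aestronglyMeasurable (by continuity))
  · filter_upwards [nu_ae_pos hν0] with l hl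
    have hx : 0 ≤ ρ * l := mul_nonneg hρ hl.le
    rw [Real.norm_eq_abs, abs_of_nonneg (one_sub_exp_neg_nonneg hx)]
    exact one_sub_exp_neg_le hx

lemma int_phi {ν : Measure ℝ} (hν0 : ν (Set.Iic 0) = 0)
    (hint : Integrable (fun l : ℝ => l) ν) {ρ : ℝ} (hρ : 0 ≤ ρ) :
    Integrable (fun l : ℝ => Real.exp (-(ρ * l)) - 1 + ρ * l) ν := by
  refine Integrable.mono' (hint.const_mul ρ) ?_ ?_
  · exact (Continuous.aestronglyMeasurable (by continuity))
  · filter_upwards [nu_ae_pos hν0] with l hl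
    have hx : 0 ≤ ρ * l := mul_nonneg hρ hl.le
    rw [Real.norm_eq_abs, abs_of_nonneg (exp_ineq1 hx).1]
    exact (exp_ineq1 hx).2

lemma neg_psi_eq {ν : Measure ℝ} (hν0 : ν (Set.Iic 0) = 0)
    (hint : Integrable (fun l : ℝ => l) ν) {m : ℝ} (hm : m = ∫ l, l ∂ν)
    (t : ℝ) {ρ : ℝ} (hρ : 0 ≤ ρ) :
    -Psi ν t ρ = (1 - t * m) * ρ +
      t * ∫ l, (Real.exp (-(ρ * l)) - 1 + ρ * l) ∂ν := by
  have h1 : (fun l : ℝ => 1 - Real.exp (-(ρ * l))) =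
      (fun l : ℝ => ρ * l - (Real.exp (-(ρ * l)) - 1 + ρ * l)) := by
    funext l; ring
  have h2 : ∫ l, (1 - Real.exp (-(ρ * l))) ∂ν =
      ρ * m - ∫ l, (Real.exp (-(ρ * l)) - 1 + ρ * l) ∂ν := by
    rw [h1, integral_sub (hint.const_mul ρ) (int_phi hν0 hint hρ), integral_const_mul, ← hm]
  unfold Psi
  rw [h2]; ring

lemma neg_psi_mono {ν : Measure ℝ} (hν0 : ν (Set.Iic 0) = 0)
    (hint : Integrable (fun l : ℝ => l) ν) {m : ℝ} (hm : m = ∫ l, l ∂ν)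
    {t : ℝ} (ht0 : 0 ≤ t) (htm : t * m ≤ 1) {ρ1 ρ2 : ℝ} (h0 : 0 ≤ ρ1) (h12 : ρ1 ≤ ρ2) :
    -Psi ν t ρ1 ≤ -Psi ν t ρ2 := by
  have h02 : 0 ≤ ρ2 := h0.trans h12
  rw [neg_psi_eq hν0 hint hm t h0, neg_psi_eq hν0 hint hm t h02]
  have hφ : ∫ l, (Real.exp (-(ρ1 * l)) - 1 + ρ1 * l) ∂ν ≤
      ∫ l, (Real.exp (-(ρ2 * l)) - 1 + ρ2 * l) ∂ν := by
    refine integral_mono_ae (int_phi hν0 hint h0) (int_phi hν0 hint h02) ?_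
    filter_upwards [nu_ae_pos hν0] with l hl
    have ha : 0 ≤ ρ1 * l := mul_nonneg h0 hl.le
    have hab : ρ1 * l ≤ ρ2 * l := mul_le_mul_of_nonneg_right h12 hl.le
    have e1 : Real.exp (-(ρ2 * l)) = Real.exp (-(ρ1 * l)) * Real.exp (-(ρ2 * l - ρ1 * l)) := by
      rw [← Real.exp_add]; ring_nf
    have e2 := one_sub_exp_neg_le (sub_nonneg.2 hab)
    have e3 := one_sub_exp_neg_nonneg (sub_nonneg.2 hab)
    have e4 : Real.exp (-(ρ1 * l)) ≤ 1 := by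
      rw [Real.exp_le_one_iff]; linarith
    have e5 := Real.exp_pos (-(ρ1 * l))
    nlinarith
  have h1 : (1 - t * m) * ρ1 ≤ (1 - t * m) * ρ2 :=
    mul_le_mul_of_nonneg_left h12 (by linarith)
  nlinarith

lemma markov_tail {ν : Measure ℝ} (hν0 : ν (Set.Iic 0) = 0)
    (hint : Integrable (fun l : ℝ => l) ν) {m : ℝ} (hm : m = ∫ l, l ∂ν)
    {x : ℝ} (hx : 0 < x) :
    ν (Set.Ioi x) ≤ ENNReal.ofReal (m / x) := by
  have hlm : ∫⁻ l, ENNReal.ofReal l ∂ν = ENNReal.ofReal m := by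
    rw [hm, MeasureTheory.ofReal_integral_eq_lintegral_ofReal hint
      ((nu_ae_pos hν0).mono fun l hl => hl.le)]
  have hmk := mul_meas_ge_le_lintegral₀
    (μ := ν) (f := fun l => ENNReal.ofReal l)
    (ENNReal.measurable_ofReal.comp measurable_id).aemeasurable (ENNReal.ofReal x)
  rw [hlm] at hmk
  have hsub : Set.Ioi x ⊆ {l : ℝ | ENNReal.ofReal x ≤ ENNReal.ofReal l} :=
    fun l hl => ENNReal.ofReal_le_ofReal (le_of_lt hl)
  have h2 : ENNReal.ofReal x * ν (Set.Ioi x) ≤ ENNReal.ofReal m :=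
    le_trans (mul_le_mul_right (measure_mono hsub) _) hmk
  rw [ENNReal.ofReal_div_of_pos hx]
  rw [ENNReal.le_div_iff_mul_le (Or.inl (by simpa using hx)) (Or.inl ENNReal.ofReal_ne_top)]
  rwa [mul_comm]

lemma tail_ne_top {ν : Measure ℝ} (hν0 : ν (Set.Iic 0) = 0)
    (hint : Integrable (fun l : ℝ => l) ν) {m : ℝ} (hm : m = ∫ l, l ∂ν)
    {x : ℝ} (hx : 0 < x) : ν (Set.Ioi x) ≠ ⊤ :=
  ne_top_of_le_ne_top ENNReal.ofReal_ne_top (markov_tail hν0 hint hm hx)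

lemma tail_toReal_le {ν : Measure ℝ} (hν0 : ν (Set.Iic 0) = 0)
    (hint : Integrable (fun l : ℝ => l) ν) {m : ℝ} (hm : m = ∫ l, l ∂ν)
    (hmpos : 0 < m) {x : ℝ} (hx : 0 < x) :
    (ν (Set.Ioi x)).toReal ≤ m / x := by
  have := ENNReal.toReal_mono ENNReal.ofReal_ne_top (markov_tail hν0 hint hm hx)
  rwa [ENNReal.toReal_ofReal (by positivity)] at this

lemma tail_global_bound {ν : Measure ℝ} (hν0 : ν (Set.Iic 0) = 0)
    (hint : Integrable (fun l : ℝ => l) ν) {m : ℝ} (hm : m = ∫ l, l ∂ν)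
    (hmpos : 0 < m) {α C : ℝ} (hα1 : 1 < α) (hα2 : α < 2)
    (htail : Tendsto (fun x : ℝ => x ^ α * (ν (Set.Ioi x)).toReal) atTop (nhds C)) :
    ∃ M : ℝ, 0 < M ∧ ∀ x : ℝ, 0 < x → (ν (Set.Ioi x)).toReal ≤ M * x ^ (-α) := by
  have hev : ∀ᶠ x : ℝ in atTop, x ^ α * (ν (Set.Ioi x)).toReal ≤ C + 1 :=
    htail.eventually (eventually_le_nhds (lt_add_one C))
  obtain ⟨X, hX⟩ := eventually_atTop.1 hev
  set X' : ℝ := max X 1 with hX'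
  have hX'1 : (1:ℝ) ≤ X' := le_max_right _ _
  have hX'pos : (0:ℝ) < X' := lt_of_lt_of_le one_pos hX'1
  refine ⟨max (C + 1) (m * X' ^ α), lt_max_of_lt_right (by positivity), ?_⟩
  intro x hx
  have hxa : (0:ℝ) < x ^ α := Real.rpow_pos_of_pos hx _
  have hxna : x ^ (-α) = (x ^ α)⁻¹ := Real.rpow_neg hx.le α
  rcases le_or_gt X' x with h | h
  · have h1 : x ^ α * (ν (Set.Ioi x)).toReal ≤ C + 1 := hX x ((le_max_left _ _).trans h)
    rw [hxna]
    rw [le_mul_inv_iff₀ hxa, mul_comm]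
    exact h1.trans (le_max_left _ _)
  · have h1 : (ν (Set.Ioi x)).toReal ≤ m / x := tail_toReal_le hν0 hint hm hmpos hx
    have h2 : x ^ (α - 1) ≤ X' ^ α := by
      calc x ^ (α - 1) ≤ X' ^ (α - 1) :=
            Real.rpow_le_rpow hx.le h.le (by linarith)
        _ ≤ X' ^ α := Real.rpow_le_rpow_of_exponent_le hX'1 (by linarith)
    have h3 : m / x ≤ m * X' ^ α * x ^ (-α) := by
      rw [hxna, div_le_iff₀ hx]
      have e : x ^ α = x ^ (α - 1) * x := by
        conv_lhs => rw [show α = (α - 1) + 1 by ring]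
        rw [Real.rpow_add hx, Real.rpow_one]
      have hX'a : (0:ℝ) < X' ^ α := Real.rpow_pos_of_pos hX'pos _
      calc m = m * x ^ α * (x ^ α)⁻¹ := by field_simp
        _ ≤ m * X' ^ α * (x ^ α)⁻¹ * x := by
            rw [e]
            have : m * (x ^ (α - 1) * x) ≤ m * (X' ^ α * x) := by
              apply mul_le_mul_of_nonneg_left _ hmpos.le
              exact mul_le_mul_of_nonneg_right h2 hx.le
            calc m * (x ^ (α - 1) * x) * (x ^ (α - 1) * x)⁻¹
                  ≤ m * (X' ^ α * x) * (x ^ (α - 1) * x)⁻¹ := by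
                    apply mul_le_mul_of_nonneg_right this
                    positivity
              _ = m * X' ^ α * (x ^ (α - 1) * x)⁻¹ * x := by ring
        _ = m * X' ^ α * (x ^ α)⁻¹ * x := by rw [e]
    refine h1.trans (h3.trans (mul_le_mul_of_nonneg_right ?_ (Real.rpow_nonneg hx.le _)))
    exact le_max_right _ _

lemma antideriv_g {ρ : ℝ} (l : ℝ) :
    ∫ t in (0:ℝ)..l, ρ * (1 - Real.exp (-(ρ * t))) =
      Real.exp (-(ρ * l)) - 1 + ρ * l := by
  have hd : ∀ t : ℝ, HasDerivAt (fun t : ℝ => ρ * t + Real.exp (-(ρ * t)))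
      (ρ * (1 - Real.exp (-(ρ * t)))) t := by
    intro t
    have h1 : HasDerivAt (fun t : ℝ => -(ρ * t)) (-ρ) t := by
      exact ((hasDerivAt_id' t).const_mul ρ).neg.congr_deriv (by ring)
    have h2 := (Real.hasDerivAt_exp (-(ρ * t))).comp t h1
    have h3 := ((hasDerivAt_id t).const_mul ρ).add h2
    exact h3.congr_deriv (by ring)
  rw [intervalIntegral.integral_eq_sub_of_hasDerivAt (fun t _ => hd t)
    ((Continuous.intervalIntegrable (by continuity) _ _))]
  simp
  ring

lemma tail_measurable (ν : Measure ℝ) : Measurable fun t : ℝ => (ν (Set.Ioi t)).toReal :=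
  (Antitone.measurable fun s t hst => measure_mono (Set.Ioi_subset_Ioi hst)).ennreal_toReal

lemma phi_layercake {ν : Measure ℝ} (hν0 : ν (Set.Iic 0) = 0)
    (hint : Integrable (fun l : ℝ => l) ν) {m : ℝ} (hm : m = ∫ l, l ∂ν)
    {ρ : ℝ} (hρ : 0 < ρ) :
    ∫ l, (Real.exp (-(ρ * l)) - 1 + ρ * l) ∂ν =
      ∫ t in Ioi (0:ℝ), (ν (Set.Ioi t)).toReal * (ρ * (1 - Real.exp (-(ρ * t)))) := by
  have g_cont : Continuous fun t : ℝ => ρ * (1 - Real.exp (-(ρ * t))) := by continuity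
  have key := lintegral_comp_eq_lintegral_meas_lt_mul ν
    (f := fun l : ℝ => l) (g := fun t : ℝ => ρ * (1 - Real.exp (-(ρ * t))))
    ((nu_ae_pos hν0).mono fun l hl => hl.le) aemeasurable_id
    (fun t _ => g_cont.intervalIntegrable _ _)
    (by
      filter_upwards [ae_restrict_mem measurableSet_Ioi] with t (ht : (0:ℝ) < t)
      exact mul_nonneg hρ.le (one_sub_exp_neg_nonneg (by positivity)))
  simp only [antideriv_g] at key
  have hLHS : ∫⁻ l, ENNReal.ofReal (Real.exp (-(ρ * l)) - 1 + ρ * l) ∂ν =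
      ENNReal.ofReal (∫ l, (Real.exp (-(ρ * l)) - 1 + ρ * l) ∂ν) := by
    rw [MeasureTheory.ofReal_integral_eq_lintegral_ofReal (int_phi hν0 hint hρ.le)
      ((nu_ae_pos hν0).mono fun l hl => (exp_ineq1 (mul_nonneg hρ.le hl.le)).1)]
  rw [hLHS] at key
  have hRHS : ∫⁻ t in Ioi (0:ℝ), ν {a : ℝ | t < a} * ENNReal.ofReal (ρ * (1 - Real.exp (-(ρ * t))))
      = ∫⁻ t in Ioi (0:ℝ),
          ENNReal.ofReal ((ν (Set.Ioi t)).toReal * (ρ * (1 - Real.exp (-(ρ * t))))) := by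
    refine lintegral_congr_ae ?_
    filter_upwards [ae_restrict_mem measurableSet_Ioi] with t (ht : (0:ℝ) < t)
    rw [ENNReal.ofReal_mul ENNReal.toReal_nonneg,
      ENNReal.ofReal_toReal (tail_ne_top hν0 hint hm ht)]
    rfl
  rw [hRHS] at key
  have hmeas : AEStronglyMeasurable
      (fun t : ℝ => (ν (Set.Ioi t)).toReal * (ρ * (1 - Real.exp (-(ρ * t)))))
      (volume.restrict (Ioi (0:ℝ))) :=
    ((tail_measurable ν).mul g_cont.measurable).aestronglyMeasurable
  have hnn : 0 ≤ᵐ[volume.restrict (Ioi (0:ℝ))]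
      fun t : ℝ => (ν (Set.Ioi t)).toReal * (ρ * (1 - Real.exp (-(ρ * t)))) := by
    filter_upwards [ae_restrict_mem measurableSet_Ioi] with t (ht : (0:ℝ) < t)
    exact mul_nonneg ENNReal.toReal_nonneg
      (mul_nonneg hρ.le (one_sub_exp_neg_nonneg (by positivity)))
  rw [MeasureTheory.integral_eq_lintegral_of_nonneg_ae hnn hmeas, ← key,
    ENNReal.toReal_ofReal]
  exact integral_nonneg_of_ae
    ((nu_ae_pos hν0).mono fun l hl => (exp_ineq1 (mul_nonneg hρ.le hl.le)).1)

lemma phi_rescaled_eq {ν : Measure ℝ} (hν0 : ν (Set.Iic 0) = 0)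
    (hint : Integrable (fun l : ℝ => l) ν) {m : ℝ} (hm : m = ∫ l, l ∂ν)
    (α : ℝ) {ρ : ℝ} (hρ : 0 < ρ) :
    (∫ l, (Real.exp (-(ρ * l)) - 1 + ρ * l) ∂ν) / ρ ^ α =
      ∫ u in Ioi (0:ℝ), (1 - Real.exp (-u)) * (ρ ^ (-α) * (ν (Set.Ioi (ρ⁻¹ * u))).toReal) := by
  have h1 := phi_layercake hν0 hint hm hρ
  have h2 : ∫ t in Ioi (0:ℝ), (ν (Set.Ioi t)).toReal * (ρ * (1 - Real.exp (-(ρ * t)))) =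
      ρ * ∫ t in Ioi (0:ℝ), (ν (Set.Ioi t)).toReal * (1 - Real.exp (-(ρ * t))) := by
    rw [← integral_const_mul]
    exact setIntegral_congr_fun measurableSet_Ioi (fun t _ => by ring)
  have h3 : ∫ t in Ioi (0:ℝ), (ν (Set.Ioi t)).toReal * (1 - Real.exp (-(ρ * t))) =
      ρ⁻¹ * ∫ u in Ioi (0:ℝ), (ν (Set.Ioi (ρ⁻¹ * u))).toReal * (1 - Real.exp (-u)) := by
    have := integral_comp_mul_left_Ioi
      (fun u : ℝ => (ν (Set.Ioi (ρ⁻¹ * u))).toReal * (1 - Real.exp (-u))) 0 hρ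
    simp only [mul_zero, smul_eq_mul] at this
    rw [← this]
    refine setIntegral_congr_fun measurableSet_Ioi (fun t _ => ?_) |>.symm
    rw [inv_mul_cancel_left₀ (ne_of_gt hρ)]
  rw [h1, h2, h3, ← mul_assoc, mul_inv_cancel₀ (ne_of_gt hρ), one_mul,
    div_eq_inv_mul, ← Real.rpow_neg hρ.le, ← integral_const_mul]
  exact setIntegral_congr_fun measurableSet_Ioi (fun u _ => by ring)

lemma phi_asymp {ν : Measure ℝ} (hν0 : ν (Set.Iic 0) = 0)
    (hint : Integrable (fun l : ℝ => l) ν) {m : ℝ} (hm : m = ∫ l, l ∂ν)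
    (hmpos : 0 < m) {α C : ℝ} (hα1 : 1 < α) (hα2 : α < 2) (hC : 0 < C)
    (htail : Tendsto (fun x : ℝ => x ^ α * (ν (Set.Ioi x)).toReal) atTop (nhds C)) :
    Tendsto (fun ρ : ℝ => (∫ l, (Real.exp (-(ρ * l)) - 1 + ρ * l) ∂ν) / ρ ^ α)
      (nhdsWithin 0 (Ioi 0)) (nhds (C * (Real.Gamma (2 - α) / (α - 1)))) := by
  obtain ⟨M, hM, hMb⟩ := tail_global_bound hν0 hint hm hmpos hα1 hα2 htail
  have hlimint : ∫ u in Ioi (0:ℝ), (1 - Real.exp (-u)) * (C * u ^ (-α)) =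
      C * (Real.Gamma (2 - α) / (α - 1)) := by
    rw [← gamma_integral_eval hα1 hα2, ← integral_const_mul]
    exact setIntegral_congr_fun measurableSet_Ioi (fun u _ => by ring)
  have key : Tendsto
      (fun ρ : ℝ => ∫ u in Ioi (0:ℝ),
        (1 - Real.exp (-u)) * (ρ ^ (-α) * (ν (Set.Ioi (ρ⁻¹ * u))).toReal))
      (nhdsWithin 0 (Ioi 0)) (nhds (∫ u in Ioi (0:ℝ), (1 - Real.exp (-u)) * (C * u ^ (-α)))) := by
    refine tendsto_integral_filter_of_dominated_convergence
      (fun u => M * ((1 - Real.exp (-u)) * u ^ (-α))) ?_ ?_ ?_ ?_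
    · filter_upwards [self_mem_nhdsWithin] with ρ (hρ : (0:ℝ) < ρ)
      exact (Measurable.aestronglyMeasurable (by
        exact ((measurable_const.sub (measurable_exp.comp measurable_neg)).mul
          (measurable_const.mul ((tail_measurable ν).comp (measurable_const_mul _))))))
    · filter_upwards [self_mem_nhdsWithin] with ρ (hρ : (0:ℝ) < ρ)
      filter_upwards [ae_restrict_mem measurableSet_Ioi] with u (hu : (0:ℝ) < u)
      have h1 : 0 ≤ 1 - Real.exp (-u) := one_sub_exp_neg_nonneg hu.le
      have hρu : 0 < ρ⁻¹ * u := by positivity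
      have h2 : (0:ℝ) ≤ ρ ^ (-α) := Real.rpow_nonneg hρ.le _
      rw [Real.norm_eq_abs, abs_of_nonneg (mul_nonneg h1 (mul_nonneg h2 ENNReal.toReal_nonneg))]
      have h3 : (ν (Set.Ioi (ρ⁻¹ * u))).toReal ≤ M * (ρ⁻¹ * u) ^ (-α) := hMb _ hρu
      have h4 : ρ ^ (-α) * (ρ⁻¹ * u) ^ (-α) = u ^ (-α) := by
        rw [Real.mul_rpow (by positivity) hu.le, Real.inv_rpow hρ.le, ← Real.rpow_neg hρ.le,
          neg_neg, ← mul_assoc, ← Real.rpow_add hρ]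
        simp
      calc (1 - Real.exp (-u)) * (ρ ^ (-α) * (ν (Set.Ioi (ρ⁻¹ * u))).toReal)
          ≤ (1 - Real.exp (-u)) * (ρ ^ (-α) * (M * (ρ⁻¹ * u) ^ (-α))) := by
            exact mul_le_mul_of_nonneg_left (mul_le_mul_of_nonneg_left h3 h2) h1
        _ = M * ((1 - Real.exp (-u)) * u ^ (-α)) := by
            rw [show ρ ^ (-α) * (M * (ρ⁻¹ * u) ^ (-α)) = M * (ρ ^ (-α) * (ρ⁻¹ * u) ^ (-α)) by ring,
              h4]; ring
    · exact (hh_integrable hα1 hα2).const_mul M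
    · filter_upwards [ae_restrict_mem measurableSet_Ioi] with u (hu : (0:ℝ) < u)
      have htt : Tendsto (fun ρ : ℝ => ρ⁻¹ * u) (nhdsWithin 0 (Ioi 0)) atTop := by
        exact Tendsto.atTop_mul_const hu tendsto_inv_nhdsGT_zero
      have h5 := (htail.comp htt).mul_const (u ^ (-α))
      have h6 : Tendsto (fun ρ : ℝ => ρ ^ (-α) * (ν (Set.Ioi (ρ⁻¹ * u))).toReal)
          (nhdsWithin 0 (Ioi 0)) (nhds (C * u ^ (-α))) := by
        refine h5.congr' ?_
        filter_upwards [self_mem_nhdsWithin] with ρ (hρ : (0:ℝ) < ρ)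
        show (ρ⁻¹ * u) ^ α * (ν (Set.Ioi (ρ⁻¹ * u))).toReal * u ^ (-α)
            = ρ ^ (-α) * (ν (Set.Ioi (ρ⁻¹ * u))).toReal
        have e1 : (ρ⁻¹ * u) ^ α = ρ ^ (-α) * u ^ α := by
          rw [Real.mul_rpow (by positivity) hu.le, Real.inv_rpow hρ.le, ← Real.rpow_neg hρ.le]
        have e2 : u ^ α * u ^ (-α) = 1 := by
          rw [← Real.rpow_add hu]; simp
        calc (ρ⁻¹ * u) ^ α * (ν (Set.Ioi (ρ⁻¹ * u))).toReal * u ^ (-α)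
            = ρ ^ (-α) * (ν (Set.Ioi (ρ⁻¹ * u))).toReal * (u ^ α * u ^ (-α)) := by
              rw [e1]; ring
          _ = ρ ^ (-α) * (ν (Set.Ioi (ρ⁻¹ * u))).toReal := by rw [e2, mul_one]
      exact (h6.const_mul _)
  rw [hlimint] at key
  refine key.congr' ?_
  filter_upwards [self_mem_nhdsWithin] with ρ (hρ : (0:ℝ) < ρ)
  exact (phi_rescaled_eq hν0 hint hm α hρ).symm

lemma rpow_tendsto_zero_within {c : ℝ} (hc : 0 < c) :
    Tendsto (fun x : ℝ => x ^ c) (nhdsWithin 0 (Ioi 0)) (nhdsWithin 0 (Ioi 0)) := by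
  rw [tendsto_nhdsWithin_iff]
  constructor
  · have h := (Real.continuousAt_rpow_const 0 c (Or.inr hc.le)).continuousWithinAt
      (s := Ioi (0:ℝ))
    rw [ContinuousWithinAt] at h
    simpa [Real.zero_rpow (ne_of_gt hc)] using h
  · filter_upwards [self_mem_nhdsWithin] with x (hx : (0:ℝ) < x)
    exact Real.rpow_pos_of_pos hx c

lemma F_tendsto {ν : Measure ℝ} (hν0 : ν (Set.Iic 0) = 0)
    (hint : Integrable (fun l : ℝ => l) ν) {m : ℝ} (hm : m = ∫ l, l ∂ν)
    (hmpos : 0 < m) {α C : ℝ} (hα1 : 1 < α) (hα2 : α < 2) (hC : 0 < C)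
    (htail : Tendsto (fun x : ℝ => x ^ α * (ν (Set.Ioi x)).toReal) atTop (nhds C))
    {y₀ : ℝ} (hy₀ : 0 < y₀) :
    Tendsto (fun t : ℝ =>
        (1 - m * t) ^ (-(α / (α - 1))) * (-Psi ν t ((1 - m * t) ^ (1 / (α - 1)) * y₀)))
      (nhdsWithin (1 / m) (Iio (1 / m)))
      (nhds (y₀ + (C * Real.Gamma (2 - α) / (m * (α - 1))) * y₀ ^ α)) := by
  have hα1' : α - 1 ≠ 0 := by intro h; linarith
  have hepos : ∀ t : ℝ, t < 1 / m → 0 < 1 - m * t := by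
    intro t ht
    have : m * t < m * (1 / m) := mul_lt_mul_of_pos_left ht hmpos
    rw [mul_one_div, div_self (ne_of_gt hmpos)] at this
    linarith
  have h_e : Tendsto (fun t : ℝ => 1 - m * t) (nhdsWithin (1 / m) (Iio (1 / m)))
      (nhdsWithin 0 (Ioi 0)) := by
    rw [tendsto_nhdsWithin_iff]
    constructor
    · have hcont : Continuous (fun t : ℝ => 1 - m * t) := by continuity
      have h9 := (hcont.tendsto (1 / m)).mono_left
        (nhdsWithin_le_nhds (s := Iio (1 / m)))
      simpa [mul_one_div, div_self (ne_of_gt hmpos), mul_inv_cancel₀ (ne_of_gt hmpos)] using h9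
    · filter_upwards [self_mem_nhdsWithin] with t (ht : t < 1 / m)
      exact hepos t ht
  have h_r : Tendsto (fun t : ℝ => (1 - m * t) ^ (1 / (α - 1)))
      (nhdsWithin (1 / m) (Iio (1 / m))) (nhdsWithin 0 (Ioi 0)) :=
    (rpow_tendsto_zero_within (div_pos one_pos (by linarith))).comp h_e
  have h_ρ : Tendsto (fun t : ℝ => (1 - m * t) ^ (1 / (α - 1)) * y₀)
      (nhdsWithin (1 / m) (Iio (1 / m))) (nhdsWithin 0 (Ioi 0)) := by
    rw [tendsto_nhdsWithin_iff]
    constructor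
    · have := (tendsto_nhdsWithin_iff.1 h_r).1.mul_const y₀
      simpa using this
    · filter_upwards [(tendsto_nhdsWithin_iff.1 h_r).2] with t (ht : _ ∈ Ioi (0:ℝ))
      exact mul_pos ht hy₀
  have hφ := (phi_asymp hν0 hint hm hmpos hα1 hα2 hC htail).comp h_ρ
  have h_t : Tendsto (fun t : ℝ => t) (nhdsWithin (1 / m) (Iio (1 / m))) (nhds (1 / m)) :=
    tendsto_id.mono_left nhdsWithin_le_nhds
  have hmain := tendsto_const_nhds (α := ℝ) (x := y₀)
    |>.add ((h_t.mul hφ).mul_const (y₀ ^ α))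
  have hval : y₀ + 1 / m * (C * (Real.Gamma (2 - α) / (α - 1))) * y₀ ^ α
      = y₀ + C * Real.Gamma (2 - α) / (m * (α - 1)) * y₀ ^ α := by
    field_simp
  rw [hval] at hmain
  refine hmain.congr' ?_
  filter_upwards [self_mem_nhdsWithin] with t (ht : t < 1 / m)
  have het := hepos t ht
  set e : ℝ := 1 - m * t with he
  set r : ℝ := e ^ (1 / (α - 1)) with hr
  have hrpos : 0 < r := Real.rpow_pos_of_pos het _
  have hρpos : 0 < r * y₀ := mul_pos hrpos hy₀
  have hec : (0:ℝ) < e ^ (α / (α - 1)) := Real.rpow_pos_of_pos het _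
  have hy₀α : (0:ℝ) < y₀ ^ α := Real.rpow_pos_of_pos hy₀ _
  have E1' : e * r = e ^ (α / (α - 1)) := by
    rw [hr]
    nth_rewrite 1 [← Real.rpow_one e]
    rw [← Real.rpow_add het, show (1:ℝ) + 1 / (α - 1) = α / (α - 1) by field_simp; ring]
  have E2 : (r * y₀) ^ α = e ^ (α / (α - 1)) * y₀ ^ α := by
    rw [Real.mul_rpow hrpos.le hy₀.le, hr, ← Real.rpow_mul het.le,
      show 1 / (α - 1) * α = α / (α - 1) by ring]
  have E3 : (1 - t * m) * (r * y₀) = e ^ (α / (α - 1)) * y₀ := by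
    rw [show 1 - t * m = e by rw [he]; ring, ← mul_assoc, E1']
  simp only [Function.comp]
  simp only [← he, ← hr]
  rw [neg_psi_eq hν0 hint hm t hρpos.le, E3, Real.rpow_neg het.le, E2]
  field_simp

lemma mt_lt_one {m t : ℝ} (hmpos : 0 < m) (ht : t < 1 / m) : m * t < 1 := by
  have : m * t < m * (1 / m) := mul_lt_mul_of_pos_left ht hmpos
  rwa [mul_one_div, div_self (ne_of_gt hmpos)] at this

section Compare
variable {ν : Measure ℝ} {m α C : ℝ} {κ : ℝ → ℝ → ℝ}

lemma kappa_lt (hν0 : ν (Set.Iic 0) = 0) (hint : Integrable (fun l : ℝ => l) ν)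
    (hm : m = ∫ l, l ∂ν) (hmpos : 0 < m) (hα1 : 1 < α)
    (hκ : ∀ t : ℝ, 0 ≤ t → t < 1 / m → ∀ z : ℝ, 0 ≤ z →
      0 ≤ κ t z ∧ -Psi ν t (κ t z) = z)
    {t z y₀ : ℝ} (ht0 : 0 ≤ t) (ht1 : t < 1 / m) (hz : 0 ≤ z) (hy₀ : 0 < y₀)
    (hF : (1 - m * t) ^ (α / (α - 1)) * z <
      -Psi ν t ((1 - m * t) ^ (1 / (α - 1)) * y₀)) :
    (1 - m * t) ^ (-(1 / (α - 1))) * κ t ((1 - m * t) ^ (α / (α - 1)) * z) < y₀ := by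
  have het : 0 < 1 - m * t := by have := mt_lt_one hmpos ht1; linarith
  set e : ℝ := 1 - m * t with he
  have hw : 0 ≤ e ^ (α / (α - 1)) * z := mul_nonneg (Real.rpow_nonneg het.le _) hz
  obtain ⟨hκ0, hκΨ⟩ := hκ t ht0 ht1 _ hw
  have hmt : t * m ≤ 1 := by have := mt_lt_one hmpos ht1; linarith
  have hlt : κ t (e ^ (α / (α - 1)) * z) < e ^ (1 / (α - 1)) * y₀ := by
    by_contra h
    push_neg at h
    have := neg_psi_mono hν0 hint hm ht0 hmt
      (mul_nonneg (Real.rpow_nonneg het.le _) hy₀.le) h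
    rw [hκΨ] at this
    linarith
  have hd : (0:ℝ) < e ^ (-(1 / (α - 1))) := Real.rpow_pos_of_pos het _
  have h2 := mul_lt_mul_of_pos_left hlt hd
  rwa [← mul_assoc, ← Real.rpow_add het, neg_add_cancel, Real.rpow_zero, one_mul] at h2

lemma kappa_gt (hν0 : ν (Set.Iic 0) = 0) (hint : Integrable (fun l : ℝ => l) ν)
    (hm : m = ∫ l, l ∂ν) (hmpos : 0 < m) (hα1 : 1 < α)
    (hκ : ∀ t : ℝ, 0 ≤ t → t < 1 / m → ∀ z : ℝ, 0 ≤ z →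
      0 ≤ κ t z ∧ -Psi ν t (κ t z) = z)
    {t z y₀ : ℝ} (ht0 : 0 ≤ t) (ht1 : t < 1 / m) (hz : 0 ≤ z) (hy₀ : 0 < y₀)
    (hF : -Psi ν t ((1 - m * t) ^ (1 / (α - 1)) * y₀) <
      (1 - m * t) ^ (α / (α - 1)) * z) :
    y₀ < (1 - m * t) ^ (-(1 / (α - 1))) * κ t ((1 - m * t) ^ (α / (α - 1)) * z) := by
  have het : 0 < 1 - m * t := by have := mt_lt_one hmpos ht1; linarith
  set e : ℝ := 1 - m * t with he
  have hw : 0 ≤ e ^ (α / (α - 1)) * z := mul_nonneg (Real.rpow_nonneg het.le _) hz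
  obtain ⟨hκ0, hκΨ⟩ := hκ t ht0 ht1 _ hw
  have hmt : t * m ≤ 1 := by have := mt_lt_one hmpos ht1; linarith
  have hlt : e ^ (1 / (α - 1)) * y₀ < κ t (e ^ (α / (α - 1)) * z) := by
    by_contra h
    push_neg at h
    have := neg_psi_mono hν0 hint hm ht0 hmt hκ0 h
    rw [hκΨ] at this
    linarith
  have hd : (0:ℝ) < e ^ (-(1 / (α - 1))) := Real.rpow_pos_of_pos het _
  have h2 := mul_lt_mul_of_pos_left hlt hd
  rwa [← mul_assoc, ← Real.rpow_add het, neg_add_cancel, Real.rpow_zero, one_mul] at h2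

end Compare

/-- Let `ν` be a measure on `(0,∞)` with finite positive mean `m` whose tail satisfies
`ν̄(x) ~ C x^{-α}` as `x → ∞`, with `α ∈ (1,2)`, `C > 0`. For `t ∈ [0,1/m)` let
`κ^(t)` be the inverse function of `-Ψ^(t)` on `[0,∞)`, and let `κ^{α,1}` be the
inverse function of `y ↦ y + K y^α` on `[0,∞)`, where `K = C Γ(2-α)/(m(α-1))`.
Then for every `z ≥ 0`,
`lim_{t→(1/m)⁻} (1-mt)^{-1/(α-1)} κ^(t)((1-mt)^{α/(α-1)} z) = κ^{α,1}(z)`. -/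
theorem kappa_rescaled_limit_stable
    (ν : Measure ℝ) (hν0 : ν (Set.Iic 0) = 0)
    (hint : Integrable (fun l : ℝ => l) ν)
    (m : ℝ) (hm : m = ∫ l, l ∂ν) (hmpos : 0 < m)
    (α C : ℝ) (hα1 : 1 < α) (hα2 : α < 2) (hC : 0 < C)
    (htail : Tendsto (fun x : ℝ => x ^ α * (ν (Set.Ioi x)).toReal)
      atTop (nhds C))
    (κ : ℝ → ℝ → ℝ)
    (hκ : ∀ t : ℝ, 0 ≤ t → t < 1 / m → ∀ z : ℝ, 0 ≤ z →
      0 ≤ κ t z ∧ -Psi ν t (κ t z) = z)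
    (hκ' : ∀ t : ℝ, 0 ≤ t → t < 1 / m → ∀ ρ : ℝ, 0 ≤ ρ →
      κ t (-Psi ν t ρ) = ρ)
    (κα : ℝ → ℝ)
    (hκα : ∀ z : ℝ, 0 ≤ z → 0 ≤ κα z ∧
      κα z + (C * Real.Gamma (2 - α) / (m * (α - 1))) * κα z ^ α = z)
    (hκα' : ∀ y : ℝ, 0 ≤ y →
      κα (y + (C * Real.Gamma (2 - α) / (m * (α - 1))) * y ^ α) = y)
    (z : ℝ) (hz : 0 ≤ z) :
    Tendsto
      (fun t : ℝ =>
        (1 - m * t) ^ (-(1 / (α - 1))) * κ t ((1 - m * t) ^ (α / (α - 1)) * z))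
      (nhdsWithin (1 / m) (Set.Iio (1 / m))) (nhds (κα z)) := by
  have hm1 : (0:ℝ) < 1 / m := by positivity
  have hΓ : 0 < Real.Gamma (2 - α) := Real.Gamma_pos_of_pos (by linarith)
  set K : ℝ := C * Real.Gamma (2 - α) / (m * (α - 1)) with hKdef
  have hK : 0 < K := by
    rw [hKdef]
    have : (0:ℝ) < m * (α - 1) := by nlinarith
    positivity
  obtain ⟨hy0, hyz⟩ := hκα z hz
  have hevent : ∀ᶠ t in nhdsWithin (1 / m) (Set.Iio (1 / m)), 0 < t ∧ t < 1 / m := by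
    have h1 : Set.Ioi (0:ℝ) ∩ Set.Iio (1 / m) ∈ nhdsWithin (1 / m) (Set.Iio (1 / m)) :=
      Filter.inter_mem (nhdsWithin_le_nhds (Ioi_mem_nhds hm1)) self_mem_nhdsWithin
    filter_upwards [h1] with t ht
    exact ⟨ht.1, ht.2⟩
  rw [tendsto_order]
  constructor
  · intro a ha
    rcases lt_or_ge a 0 with ha0 | ha0
    · filter_upwards [hevent] with t ⟨ht0, ht1⟩
      have het : 0 < 1 - m * t := by have := mt_lt_one hmpos ht1; linarith
      have hw : 0 ≤ (1 - m * t) ^ (α / (α - 1)) * z :=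
        mul_nonneg (Real.rpow_nonneg het.le _) hz
      exact lt_of_lt_of_le ha0 (mul_nonneg (Real.rpow_nonneg het.le _)
        (hκ t ht0.le ht1 _ hw).1)
    · have hypos : 0 < κα z := lt_of_le_of_lt ha0 ha
      set y₁ : ℝ := (a + κα z) / 2 with hy₁def
      have ha1 : a < y₁ := by rw [hy₁def]; linarith
      have h1y : y₁ < κα z := by rw [hy₁def]; linarith
      have hy₁ : 0 < y₁ := by rw [hy₁def]; linarith
      have hg : y₁ + K * y₁ ^ α < z := by
        have h2 : y₁ ^ α < κα z ^ α := Real.rpow_lt_rpow hy₁.le h1y (by linarith)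
        nlinarith
      have hFt := F_tendsto hν0 hint hm hmpos hα1 hα2 hC htail hy₁
      have hev2 := hFt.eventually_lt_const hg
      filter_upwards [hev2, hevent] with t hFt2 ⟨ht0, ht1⟩
      have het : 0 < 1 - m * t := by have := mt_lt_one hmpos ht1; linarith
      have hec : (0:ℝ) < (1 - m * t) ^ (α / (α - 1)) := Real.rpow_pos_of_pos het _
      have hP : -Psi ν t ((1 - m * t) ^ (1 / (α - 1)) * y₁) <
          (1 - m * t) ^ (α / (α - 1)) * z := by
        have h4 := mul_lt_mul_of_pos_left hFt2 hec
        rwa [← mul_assoc, ← Real.rpow_add het, add_neg_cancel, Real.rpow_zero, one_mul] at h4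
      exact lt_trans ha1 (kappa_gt hν0 hint hm hmpos hα1 hκ ht0.le ht1 hz hy₁ hP)
  · intro b hb
    set y₂ : ℝ := (κα z + b) / 2 with hy₂def
    have h2y : κα z < y₂ := by rw [hy₂def]; linarith
    have h2b : y₂ < b := by rw [hy₂def]; linarith
    have hy₂ : 0 < y₂ := lt_of_le_of_lt hy0 h2y
    have hg : z < y₂ + K * y₂ ^ α := by
      have h2 : κα z ^ α ≤ y₂ ^ α := Real.rpow_le_rpow hy0 h2y.le (by linarith)
      nlinarith
    have hFt := F_tendsto hν0 hint hm hmpos hα1 hα2 hC htail hy₂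
    have hev2 := hFt.eventually_const_lt hg
    filter_upwards [hev2, hevent] with t hFt2 ⟨ht0, ht1⟩
    have het : 0 < 1 - m * t := by have := mt_lt_one hmpos ht1; linarith
    have hec : (0:ℝ) < (1 - m * t) ^ (α / (α - 1)) := Real.rpow_pos_of_pos het _
    have hP : (1 - m * t) ^ (α / (α - 1)) * z <
        -Psi ν t ((1 - m * t) ^ (1 / (α - 1)) * y₂) := by
      have h4 := mul_lt_mul_of_pos_left hFt2 hec
      rwa [← mul_assoc, ← Real.rpow_add het, add_neg_cancel, Real.rpow_zero, one_mul] at h4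
    exact lt_trans (kappa_lt hν0 hint hm hmpos hα1 hκ ht0.le ht1 hz hy₂ hP) h2b
end

section
/- Let L be a random variable whose law is (1/(1+m̂))(δ₀(dx) + 1_{x>0} x Π(dx)), where m̂ = ∫_0^∞ x Π(dx), and let U be uniformly distributed on [0,1] and independent of L. Then for all λ, μ ≥ 0 with λ ≠ μ, E[exp(−λ U L − μ (1−U) L)] = (1/(1+m̂)) · (κ(λ) − κ(μ))/(λ − μ). -/
open MeasureTheory Filter ProbabilityTheory

/-- Let `Π` be a measure on `(0,∞)` with `m̂ = ∫ x Π(dx) < ∞` and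
`κ(ρ) = ρ + ∫_0^∞ (1 - e^{-ρ x}) Π(dx)`. Let `L` be a random variable with law
`(1/(1+m̂))(δ₀(dx) + 1_{x>0} x Π(dx))` and let `U` be uniform on `[0,1]`,
independent of `L`. Then for all `λ, μ ≥ 0` with `λ ≠ μ`,
`E[exp(-λ U L - μ (1-U) L)] = (1/(1+m̂)) (κ(λ) - κ(μ))/(λ - μ)`. -/
theorem laplace_transform_size_biased_split
    {Ω : Type*} [MeasurableSpace Ω] (Pr : Measure Ω) [IsProbabilityMeasure Pr]
    (P : Measure ℝ) (hP0 : P (Set.Iic 0) = 0)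
    (hint : Integrable (fun x : ℝ => x) P)
    (mhat : ℝ) (hmhat : mhat = ∫ x, x ∂P)
    (κ : ℝ → ℝ)
    (hκ : ∀ ρ : ℝ, κ ρ = ρ + ∫ x, (1 - Real.exp (-(ρ * x))) ∂P)
    (L U : Ω → ℝ) (hL : Measurable L) (hU : Measurable U)
    (hLlaw : Measure.map L Pr =
      (ENNReal.ofReal (1 + mhat))⁻¹ •
        (Measure.dirac 0 + P.withDensity (fun x => ENNReal.ofReal x)))
    (hUlaw : Measure.map U Pr = volume.restrict (Set.Icc 0 1))
    (hindep : IndepFun U L Pr)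
    (lam mu : ℝ) (hlam : 0 ≤ lam) (hmu : 0 ≤ mu) (hne : lam ≠ mu) :
    ∫ ω, Real.exp (-(lam * (U ω * L ω)) - mu * ((1 - U ω) * L ω)) ∂Pr =
      (1 + mhat)⁻¹ * ((κ lam - κ mu) / (lam - mu)) := by
  have hlm : lam - mu ≠ 0 := sub_ne_zero.mpr hne
  -- P-a.e. x is positive
  have hPpos : ∀ᵐ x ∂P, 0 < x := by
    rw [ae_iff]
    refine measure_mono_null (fun x hx => ?_) hP0
    simpa using not_lt.mp hx
  have hm0 : 0 ≤ mhat := by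
    rw [hmhat]
    exact integral_nonneg_of_ae (hPpos.mono fun x hx => hx.le)
  have h1m : (0:ℝ) < 1 + mhat := by linarith
  set c : ENNReal := (ENNReal.ofReal (1 + mhat))⁻¹ with hc
  have hc0 : c ≠ 0 := by
    simp [hc, ENNReal.inv_ne_zero]
  have hcT : c ≠ ⊤ := by
    simp only [hc, ne_eq, ENNReal.inv_eq_top, ENNReal.ofReal_eq_zero, not_le]
    exact h1m
  set ν : Measure ℝ := Measure.map L Pr with hν
  haveI hνP : IsProbabilityMeasure ν := Measure.isProbabilityMeasure_map hL.aemeasurable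
  haveI : IsFiniteMeasure (volume.restrict (Set.Icc (0:ℝ) 1)) := by
    constructor
    rw [Measure.restrict_apply_univ]
    simp [Real.volume_Icc]
  set f : ℝ × ℝ → ℝ :=
    fun p => Real.exp (-(lam * (p.1 * p.2)) - mu * ((1 - p.1) * p.2)) with hf
  have hfc : Continuous f := by fun_prop
  -- the joint law
  have hmap : Measure.map (fun ω => (U ω, L ω)) Pr
      = (volume.restrict (Set.Icc (0:ℝ) 1)).prod ν := by
    rw [hν, ← hUlaw]
    exact (indepFun_iff_map_prod_eq_prod_map_map hU.aemeasurable hL.aemeasurable).mp hindep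
  have h1 : ∫ ω, Real.exp (-(lam * (U ω * L ω)) - mu * ((1 - U ω) * L ω)) ∂Pr
      = ∫ p, f p ∂((volume.restrict (Set.Icc (0:ℝ) 1)).prod ν) := by
    rw [← hmap, integral_map (hU.aemeasurable.prodMk hL.aemeasurable)
      hfc.aestronglyMeasurable]
  -- ν-a.e. nonneg
  have hwd0 : P.withDensity (fun x => ENNReal.ofReal x) (Set.Iio 0) = 0 := by
    rw [withDensity_apply _ measurableSet_Iio]
    exact setLIntegral_measure_zero _ _ (measure_mono_null Set.Iio_subset_Iic_self hP0)
  have haeL : ∀ᵐ l ∂ν, 0 ≤ l := by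
    rw [hLlaw, ae_iff]
    have hs : {l : ℝ | ¬ 0 ≤ l} = Set.Iio 0 := by ext x; simp [not_le]
    rw [hs]
    simp [Measure.smul_apply, Measure.add_apply, hwd0,
      Measure.dirac_apply' _ measurableSet_Iio]
  -- integrability on the product
  have haeprod : ∀ᵐ p ∂((volume.restrict (Set.Icc (0:ℝ) 1)).prod ν),
      p.1 ∈ Set.Icc (0:ℝ) 1 ∧ 0 ≤ p.2 := by
    rw [Measure.ae_prod_iff_ae_ae]
    · filter_upwards [ae_restrict_mem measurableSet_Icc] with u hu
      filter_upwards [haeL] with l hl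
      exact ⟨hu, hl⟩
    · exact (measurableSet_Icc.preimage measurable_fst).inter
        (measurableSet_Ici.preimage measurable_snd)
  have hfint : Integrable f ((volume.restrict (Set.Icc (0:ℝ) 1)).prod ν) := by
    refine Integrable.mono' (integrable_const 1) hfc.aestronglyMeasurable ?_
    filter_upwards [haeprod] with p hp
    have h1 : 0 ≤ lam * (p.1 * p.2) :=
      mul_nonneg hlam (mul_nonneg hp.1.1 hp.2)
    have h2 : 0 ≤ mu * ((1 - p.1) * p.2) :=
      mul_nonneg hmu (mul_nonneg (by linarith [hp.1.2]) hp.2)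
    rw [hf, Real.norm_eq_abs, abs_of_pos (Real.exp_pos _)]
    calc Real.exp (-(lam * (p.1 * p.2)) - mu * ((1 - p.1) * p.2))
        ≤ Real.exp 0 := Real.exp_le_exp.mpr (by linarith)
      _ = 1 := Real.exp_zero
  -- Fubini
  set H : ℝ → ℝ := fun l => ∫ u in Set.Icc (0:ℝ) 1,
    Real.exp (-(lam * (u * l)) - mu * ((1 - u) * l)) with hH
  have h2 : ∫ p, f p ∂((volume.restrict (Set.Icc (0:ℝ) 1)).prod ν)
      = ∫ l, H l ∂ν := integral_prod_symm f hfint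
  have hHint : Integrable H ν := hfint.integral_prod_right
  -- value of H at 0
  have hH0 : H 0 = 1 := by
    rw [hH]
    simp [Real.volume_Icc]
  -- value of H at nonzero points
  have hHx : ∀ x : ℝ, x ≠ 0 →
      x * H x = (Real.exp (-(mu * x)) - Real.exp (-(lam * x))) / (lam - mu) := by
    intro x hx
    have hb : -((lam - mu) * x) ≠ 0 := by
      simp only [ne_eq, neg_eq_zero, mul_eq_zero, not_or]
      exact ⟨hlm, hx⟩
    have hHx1 : H x = Real.exp (-(mu * x)) *
        ((-((lam - mu) * x))⁻¹ * (Real.exp (-((lam - mu) * x)) - 1)) := by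
      rw [hH]
      have : ∀ u : ℝ, Real.exp (-(lam * (u * x)) - mu * ((1 - u) * x))
          = Real.exp (-(mu * x)) * Real.exp (u * -((lam - mu) * x)) := by
        intro u
        rw [← Real.exp_add]
        ring_nf
      simp only [this]
      rw [integral_const_mul, MeasureTheory.integral_Icc_eq_integral_Ioc,
        ← intervalIntegral.integral_of_le (by norm_num : (0:ℝ) ≤ 1),
        intervalIntegral.integral_comp_mul_right Real.exp hb]
      simp [Real.exp_zero, smul_eq_mul]
    rw [hHx1]
    have he : Real.exp (-(mu * x)) * Real.exp (-((lam - mu) * x))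
        = Real.exp (-(lam * x)) := by
      rw [← Real.exp_add]; ring_nf
    field_simp
    linear_combination (norm := ring_nf) (-1 : ℝ) * he
  -- split the integral over ν
  have hHint' : Integrable H (Measure.dirac 0
      + P.withDensity (fun x => ENNReal.ofReal x)) := by
    rw [hLlaw] at hHint
    exact (integrable_smul_measure hc0 hcT).mp hHint
  have hHd : Integrable H (Measure.dirac (0:ℝ)) := (integrable_add_measure.mp hHint').1
  have hHw : Integrable H (P.withDensity (fun x => ENNReal.ofReal x)) :=
    (integrable_add_measure.mp hHint').2
  have hcr : c.toReal = (1 + mhat)⁻¹ := by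
    rw [hc, ENNReal.toReal_inv, ENNReal.toReal_ofReal h1m.le]
  have h3 : ∫ l, H l ∂ν = (1 + mhat)⁻¹ *
      (H 0 + ∫ l, H l ∂(P.withDensity (fun x => ENNReal.ofReal x))) := by
    rw [hLlaw, integral_smul_measure, integral_add_measure hHd hHw, integral_dirac,
      hcr, smul_eq_mul]
  -- compute the withDensity integral
  have hdens : (fun x : ℝ => ENNReal.ofReal x) = fun x => ((Real.toNNReal x : NNReal) : ENNReal) := by
    ext x; simp [ENNReal.ofReal]
  have h4 : ∫ l, H l ∂(P.withDensity (fun x => ENNReal.ofReal x))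
      = ∫ x, (Real.exp (-(mu * x)) - Real.exp (-(lam * x))) / (lam - mu) ∂P := by
    rw [hdens, integral_withDensity_eq_integral_smul measurable_real_toNNReal]
    refine integral_congr_ae ?_
    filter_upwards [hPpos] with x hx
    rw [NNReal.smul_def, smul_eq_mul, Real.coe_toNNReal _ hx.le, hHx x hx.ne']
  -- integrability of the exponential pieces
  have hexpint : ∀ ρ : ℝ, 0 ≤ ρ → Integrable (fun x => 1 - Real.exp (-(ρ * x))) P := by
    intro ρ hρ
    refine Integrable.mono' (hint.const_mul ρ) ?_ ?_
    · exact (Continuous.aestronglyMeasurable (by fun_prop))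
    · filter_upwards [hPpos] with x hx
      have ht : 0 ≤ ρ * x := mul_nonneg hρ hx.le
      have h1 := Real.add_one_le_exp (-(ρ * x))
      have h2 : Real.exp (-(ρ * x)) ≤ 1 := by
        calc Real.exp (-(ρ * x)) ≤ Real.exp 0 := Real.exp_le_exp.mpr (by linarith)
          _ = 1 := Real.exp_zero
      rw [Real.norm_eq_abs, abs_le]
      constructor <;> nlinarith
  have h5 : ∫ x, (Real.exp (-(mu * x)) - Real.exp (-(lam * x))) / (lam - mu) ∂P
      = (lam - mu)⁻¹ * ((κ lam - lam) - (κ mu - mu)) := by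
    have : ∀ x : ℝ, (Real.exp (-(mu * x)) - Real.exp (-(lam * x))) / (lam - mu)
        = (lam - mu)⁻¹ * ((1 - Real.exp (-(lam * x))) - (1 - Real.exp (-(mu * x)))) := by
      intro x; rw [div_eq_inv_mul]; ring
    simp only [this]
    rw [integral_const_mul, integral_sub (hexpint lam hlam) (hexpint mu hmu)]
    rw [hκ lam, hκ mu]
    ring
  rw [h1, h2, h3, hH0, h4, h5]
  field_simp
  ring
end
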